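/- Fix n ≥ 1 and x_1, …, x_n ∈ ℕ₊; let n_t = #{i ≤ n : x_i = t} and n_{>t} = #{i ≤ n : x_i > t}, and define the likelihood L(w) = ∏_{i=1}^n P_w({x_i}) = ∏_{t≥1} w_t^{n_t}(1 − w_t)^{n_{>t}}. Then Z := ∫ L dΛ_m ∈ (0,∞) and the measure Λ_m weighted by the density L equals Z · Λ_{m_*}, where m_* is the measure on ℕ₊ with m_*({t}) = m({t}) + n_t. That is, the posterior of a Dirichlet process Dir(m) given an i.i.d. sample X_1, …, X_n is the Dirichlet process Dir(m_*). -/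

import Mathlib

open MeasureTheory Measure ENNReal Set

/-! # Setup

Stick-breaking representation of the Dirichlet process `Dir(m)` on `ℕ+`: `L` (denoted
`Λ_m` in the paper) is the product probability measure on `[0,1]^{ℕ+}` whose `t`-th
coordinate is `Beta(m({t}), m((t,∞)))`, characterized by its cylinder values (hypothesis
`hL`), and `P_w({t}) = w_t ∏_{k=1}^{t-1}(1 - w_k)` are the stick-breaking weights. -/

/-- The Beta distribution with parameters `a, b > 0`, as a measure on `ℝ`
(supported on `(0,1)`). -/
noncomputable def betaMeasure (a b : ℝ) : Measure ℝ :=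
  (volume.restrict (Set.Ioo (0 : ℝ) 1)).withDensity
    (fun x => ENNReal.ofReal
      (Real.Gamma (a + b) / (Real.Gamma a * Real.Gamma b) * x ^ (a - 1) * (1 - x) ^ (b - 1)))

/-- `m((t,∞)) = ∑_{s > t} m({s})`. -/
noncomputable def survMass (m : ℕ+ → ℝ) (t : ℕ) : ℝ :=
  ∑' s : ℕ+, if t < (s : ℕ) then m s else 0

/-- Stick-breaking weights `P_w({t}) = w_t ∏_{k=1}^{t-1} (1 - w_k)`. -/
noncomputable def stickWeight (w : ℕ+ → ℝ) (t : ℕ+) : ℝ :=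
  w t * ∏ k ∈ Finset.range ((t : ℕ) - 1), (1 - w k.succPNat)

lemma realBeta_intervalIntegrable {a b : ℝ} (ha : 0 < a) (hb : 0 < b) :
    IntervalIntegrable (fun x : ℝ => x ^ (a - 1) * (1 - x) ^ (b - 1)) volume 0 1 := by
  have h := Complex.betaIntegral_convergent (u := a) (v := b) (by simpa) (by simpa)
  have h2 : IntervalIntegrable (fun x : ℝ =>
      ((x : ℂ) ^ ((a : ℂ) - 1) * ((1 : ℂ) - x) ^ ((b : ℂ) - 1)).re) volume 0 1 := by
    constructor
    · exact h.1.re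
    · exact h.2.re
  refine h2.congr ?_
  intro x hx
  dsimp only
  rw [Set.uIoc_of_le (by norm_num : (0:ℝ) ≤ 1)] at hx
  have hx0 : 0 ≤ x := le_of_lt hx.1
  have hx1 : 0 ≤ 1 - x := by linarith [hx.2]
  rw [show ((a : ℂ) - 1) = ((a - 1 : ℝ) : ℂ) by push_cast; ring,
    show ((b : ℂ) - 1) = ((b - 1 : ℝ) : ℂ) by push_cast; ring,
    ← Complex.ofReal_cpow hx0, show ((1:ℂ) - (x:ℂ)) = ((1 - x : ℝ) : ℂ) by push_cast; ring,
    ← Complex.ofReal_cpow hx1, ← Complex.ofReal_mul, Complex.ofReal_re]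

lemma realBeta_integral {a b : ℝ} (ha : 0 < a) (hb : 0 < b) :
    ∫ x in Set.Ioo (0:ℝ) 1, x ^ (a - 1) * (1 - x) ^ (b - 1) =
      Real.Gamma a * Real.Gamma b / Real.Gamma (a + b) := by
  have key := Complex.Gamma_mul_Gamma_eq_betaIntegral (s := a) (t := b) (by simpa) (by simpa)
  have hcongr : Complex.betaIntegral a b =
      ((∫ x in (0:ℝ)..1, x ^ (a - 1) * (1 - x) ^ (b - 1) : ℝ) : ℂ) := by
    rw [Complex.betaIntegral, ← intervalIntegral.integral_ofReal]
    refine intervalIntegral.integral_congr_ae ?_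
    filter_upwards with x hx
    rw [Set.uIoc_of_le (by norm_num : (0:ℝ) ≤ 1)] at hx
    have hx0 : 0 ≤ x := le_of_lt hx.1
    have hx1 : 0 ≤ 1 - x := by linarith [hx.2]
    rw [show ((a : ℂ) - 1) = ((a - 1 : ℝ) : ℂ) by push_cast; ring,
      show ((b : ℂ) - 1) = ((b - 1 : ℝ) : ℂ) by push_cast; ring,
      ← Complex.ofReal_cpow hx0, show ((1:ℂ) - (x:ℂ)) = ((1 - x : ℝ) : ℂ) by push_cast; ring,
      ← Complex.ofReal_cpow hx1, ← Complex.ofReal_mul]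
  rw [hcongr, show ((a:ℂ) + b) = ((a + b : ℝ) : ℂ) by push_cast; ring] at key
  rw [Complex.Gamma_ofReal, Complex.Gamma_ofReal, Complex.Gamma_ofReal] at key
  have hG : Real.Gamma (a + b) ≠ 0 := (Real.Gamma_pos_of_pos (by linarith)).ne'
  have : Real.Gamma a * Real.Gamma b =
      Real.Gamma (a + b) * ∫ x in (0:ℝ)..1, x ^ (a - 1) * (1 - x) ^ (b - 1) := by
    exact_mod_cast key
  rw [intervalIntegral.integral_of_le (by norm_num : (0:ℝ) ≤ 1),
    MeasureTheory.integral_Ioc_eq_integral_Ioo] at this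
  field_simp
  linarith [this]

noncomputable def betaFn (a b : ℝ) : ℝ := Real.Gamma a * Real.Gamma b / Real.Gamma (a + b)

lemma betaFn_pos {a b : ℝ} (ha : 0 < a) (hb : 0 < b) : 0 < betaFn a b :=
  div_pos (mul_pos (Real.Gamma_pos_of_pos ha) (Real.Gamma_pos_of_pos hb))
    (Real.Gamma_pos_of_pos (by linarith))

lemma betaDensity_measurable (a b : ℝ) :
    Measurable (fun x : ℝ => ENNReal.ofReal
      (Real.Gamma (a + b) / (Real.Gamma a * Real.Gamma b) * x ^ (a - 1) * (1 - x) ^ (b - 1))) :=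
  (((measurable_id'.pow_const _).const_mul _).mul
    ((measurable_const.sub measurable_id').pow_const _)).ennreal_ofReal

lemma betaMeasure_univ {a b : ℝ} (ha : 0 < a) (hb : 0 < b) :
    betaMeasure a b Set.univ = 1 := by
  rw [betaMeasure, withDensity_apply _ MeasurableSet.univ, Measure.restrict_univ]
  have hint : IntegrableOn (fun x : ℝ => x ^ (a - 1) * (1 - x) ^ (b - 1)) (Set.Ioo 0 1) := by
    have h0 := realBeta_intervalIntegrable ha hb
    rw [intervalIntegrable_iff_integrableOn_Ioc_of_le (by norm_num)] at h0
    exact h0.mono_set Set.Ioo_subset_Ioc_self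
  have hint2 : IntegrableOn (fun x : ℝ =>
      Real.Gamma (a + b) / (Real.Gamma a * Real.Gamma b) * x ^ (a - 1) * (1 - x) ^ (b - 1))
      (Set.Ioo 0 1) := by
    simp only [mul_assoc]
    exact hint.const_mul (Real.Gamma (a + b) / (Real.Gamma a * Real.Gamma b))
  rw [← ofReal_integral_eq_lintegral_ofReal hint2 ?_]
  · have : ∫ x in Set.Ioo (0:ℝ) 1,
        Real.Gamma (a + b) / (Real.Gamma a * Real.Gamma b) * x ^ (a - 1) * (1 - x) ^ (b - 1)
        = Real.Gamma (a + b) / (Real.Gamma a * Real.Gamma b) *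
          ∫ x in Set.Ioo (0:ℝ) 1, x ^ (a - 1) * (1 - x) ^ (b - 1) := by
      simp_rw [mul_assoc]
      exact integral_const_mul _ _
    rw [this, realBeta_integral ha hb]
    have h1 : Real.Gamma a * Real.Gamma b ≠ 0 :=
      (mul_pos (Real.Gamma_pos_of_pos ha) (Real.Gamma_pos_of_pos hb)).ne'
    have h2 : Real.Gamma (a + b) ≠ 0 := (Real.Gamma_pos_of_pos (by linarith)).ne'
    rw [div_mul_div_comm, mul_comm, div_self (by exact mul_ne_zero h1 h2), ENNReal.ofReal_one]
  · filter_upwards [ae_restrict_mem measurableSet_Ioo] with x hx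
    have hx0 : (0:ℝ) < x := hx.1
    have hx1 : (0:ℝ) < 1 - x := by linarith [hx.2]
    positivity

theorem betaMeasure_isProb {a b : ℝ} (ha : 0 < a) (hb : 0 < b) :
    IsProbabilityMeasure (betaMeasure a b) := ⟨betaMeasure_univ ha hb⟩

lemma betaMeasure_pow_eval {a b : ℝ} (ha : 0 < a) (hb : 0 < b) (p q : ℕ) {B : Set ℝ}
    (hB : MeasurableSet B) :
    ∫⁻ x, B.indicator (fun y => ENNReal.ofReal (y ^ p * (1 - y) ^ q)) x ∂betaMeasure a b
      = ENNReal.ofReal (betaFn (a + p) (b + q) / betaFn a b) *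
        betaMeasure (a + p) (b + q) B := by
  have hGa := Real.Gamma_pos_of_pos ha
  have hGb := Real.Gamma_pos_of_pos hb
  have hGab := Real.Gamma_pos_of_pos (show (0:ℝ) < a + b by linarith)
  have ha' : (0:ℝ) < a + p := by positivity
  have hb' : (0:ℝ) < b + q := by positivity
  have hGa' := Real.Gamma_pos_of_pos ha'
  have hGb' := Real.Gamma_pos_of_pos hb'
  have hGab' := Real.Gamma_pos_of_pos (show (0:ℝ) < a + p + (b + q) by positivity)
  rw [lintegral_indicator hB, betaMeasure, restrict_withDensity hB,
    lintegral_withDensity_eq_lintegral_mul _ (betaDensity_measurable a b)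
      (show Measurable fun y : ℝ => ENNReal.ofReal (y ^ p * (1 - y) ^ q) from
        ((measurable_id'.pow_const p).mul
          ((measurable_const.sub measurable_id').pow_const q)).ennreal_ofReal),
    Measure.restrict_restrict hB]
  rw [betaMeasure, withDensity_apply _ hB, Measure.restrict_restrict hB,
    ← lintegral_const_mul _ (betaDensity_measurable (a + p) (b + q))]
  refine setLIntegral_congr_fun (hB.inter measurableSet_Ioo) ?_
  intro x hx
  have hx0 : (0:ℝ) < x := hx.2.1
  have hx1 : (0:ℝ) < 1 - x := by linarith [hx.2.2]
  simp only [Pi.mul_apply]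
  rw [← ENNReal.ofReal_mul (mul_nonneg (mul_nonneg (div_pos hGab (mul_pos hGa hGb)).le
      (Real.rpow_nonneg hx0.le _)) (Real.rpow_nonneg hx1.le _)),
    ← ENNReal.ofReal_mul (div_pos (betaFn_pos ha' hb') (betaFn_pos ha hb)).le]
  congr 1
  have e1 : x ^ (a - 1) * x ^ p = x ^ (a + p - 1) := by
    rw [← Real.rpow_natCast x p, ← Real.rpow_add hx0]
    ring_nf
  have e2 : (1 - x) ^ (b - 1) * (1 - x) ^ q = (1 - x) ^ (b + q - 1) := by
    rw [← Real.rpow_natCast (1 - x) q, ← Real.rpow_add hx1]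
    ring_nf
  have hcoef : betaFn (a + p) (b + q) / betaFn a b *
      (Real.Gamma (a + p + (b + q)) / (Real.Gamma (a + p) * Real.Gamma (b + q)))
      = Real.Gamma (a + b) / (Real.Gamma a * Real.Gamma b) := by
    rw [betaFn, betaFn]
    field_simp
  calc Real.Gamma (a + b) / (Real.Gamma a * Real.Gamma b) * x ^ (a - 1) * (1 - x) ^ (b - 1) *
        (x ^ p * (1 - x) ^ q)
      = Real.Gamma (a + b) / (Real.Gamma a * Real.Gamma b) *
        (x ^ (a - 1) * x ^ p) * ((1 - x) ^ (b - 1) * (1 - x) ^ q) := by ring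
    _ = betaFn (a + p) (b + q) / betaFn a b *
        (Real.Gamma (a + p + (b + q)) / (Real.Gamma (a + p) * Real.Gamma (b + q)) *
          x ^ (a + p - 1) * (1 - x) ^ (b + q - 1)) := by
      rw [e1, e2, ← hcoef]; ring


theorem lintegral_pi_fin_prod {n : ℕ} {E : Fin n → Type*} [∀ i, MeasurableSpace (E i)]
    (μ : ∀ i, Measure (E i)) [∀ i, SigmaFinite (μ i)]
    (f : ∀ i, E i → ℝ≥0∞) (hf : ∀ i, Measurable (f i)) :
    ∫⁻ x : ∀ i, E i, ∏ i, f i (x i) ∂Measure.pi μ = ∏ i, ∫⁻ t, f i t ∂μ i := by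
  induction n with
  | zero => simp [lintegral_const, Measure.pi_empty_univ]
  | succ n ih =>
    rw [((measurePreserving_piFinSuccAbove μ 0).symm
        (MeasurableEquiv.piFinSuccAbove E 0)).lintegral_map_equiv
      (fun x => ∏ i, f i (x i)) _]
    simp_rw [MeasurableEquiv.piFinSuccAbove_symm_apply, Fin.insertNthEquiv,
      Fin.prod_univ_succ, Fin.insertNth_zero, Equiv.coe_fn_mk, Fin.cons_succ,
      Fin.cons_zero]
    have hg : Measurable fun y : ∀ j : Fin n, E (Fin.succ j) => ∏ x : Fin n, f (Fin.succ x) (y x) :=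
      Finset.measurable_prod _ fun i _ => (hf _).comp (measurable_pi_apply i)
    exact (lintegral_prod_mul (μ := μ 0) (ν := Measure.pi fun j : Fin n => μ (Fin.succ j))
      (hf 0).aemeasurable hg.aemeasurable).trans (congrArg _
        (ih (fun j => μ (Fin.succ j)) (fun j => f (Fin.succ j)) (fun j => hf _)))

theorem lintegral_pi_prod {ι : Type*} [Fintype ι] {E : ι → Type*} [∀ i, MeasurableSpace (E i)]
    (μ : ∀ i, Measure (E i)) [∀ i, SigmaFinite (μ i)]
    (f : ∀ i, E i → ℝ≥0∞) (hf : ∀ i, Measurable (f i)) :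
    ∫⁻ x : ∀ i, E i, ∏ i, f i (x i) ∂Measure.pi μ = ∏ i, ∫⁻ t, f i t ∂μ i := by
  let e := (Fintype.equivFin ι).symm
  rw [(measurePreserving_piCongrLeft μ e).lintegral_map_equiv (fun x => ∏ i, f i (x i)) _]
  simp_rw [← e.prod_comp, MeasurableEquiv.coe_piCongrLeft, Equiv.piCongrLeft_apply_apply]
  exact lintegral_pi_fin_prod _ _ (fun i => hf _)

section aux

lemma survMass_summand_summable {m : ℕ+ → ℝ} (hm : ∀ t, 0 < m t) (hmsum : Summable m) (t : ℕ) :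
    Summable (fun s : ℕ+ => if t < (s : ℕ) then m s else 0) := by
  refine Summable.of_nonneg_of_le (fun s => ?_) (fun s => ?_) hmsum
  · split <;> simp [le_of_lt (hm _)]
  · split <;> simp [le_of_lt (hm _), le_refl]

lemma survMass_pos {m : ℕ+ → ℝ} (hm : ∀ t, 0 < m t) (hmsum : Summable m) (t : ℕ) :
    0 < survMass m t := by
  have hsum := survMass_summand_summable hm hmsum t
  have hle := Summable.le_tsum hsum t.succPNat (fun j _ => by split <;> simp [le_of_lt (hm _)])
  have : (if t < (t.succPNat : ℕ) then m t.succPNat else 0) = m t.succPNat := by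
    rw [if_pos]; simp [Nat.succPNat]
  rw [this] at hle
  exact lt_of_lt_of_le (hm _) hle

lemma stick_prod_eq {n : ℕ} (xobs : Fin n → ℕ+) (w : ℕ+ → ℝ) (K : Finset ℕ+)
    (hK : ∀ (i : Fin n) (t : ℕ+), t ≤ xobs i → t ∈ K) :
    ∏ i, stickWeight w (xobs i) =
      ∏ t ∈ K, (w t ^ (Finset.univ.filter (fun i : Fin n => xobs i = t)).card *
        (1 - w t) ^ (Finset.univ.filter (fun i : Fin n => t < xobs i)).card) := by
  unfold stickWeight
  rw [Finset.prod_mul_distrib, Finset.prod_mul_distrib]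
  congr 1
  · rw [← Finset.prod_fiberwise_of_maps_to (fun i _ => hK i (xobs i) le_rfl)
      (fun i => w (xobs i))]
    refine Finset.prod_congr rfl fun t ht => ?_
    rw [Finset.prod_congr rfl (fun i hi => by
        rw [(Finset.mem_filter.mp hi).2] : ∀ i ∈ Finset.univ.filter (fun i : Fin n => xobs i = t),
          w (xobs i) = w t), Finset.prod_const]
  · have step : ∀ i : Fin n, ∏ k ∈ Finset.range ((xobs i : ℕ) - 1), (1 - w k.succPNat)
        = ∏ t ∈ K, (if t < xobs i then (1 - w t) else 1) := by
      intro i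
      rw [← Finset.prod_filter]
      refine Finset.prod_nbij' (fun k => k.succPNat) (fun t => (t : ℕ) - 1) ?_ ?_ ?_ ?_ ?_
      · intro k hk
        rw [Finset.mem_range] at hk
        have hk1 : k + 1 < (xobs i : ℕ) := Nat.add_lt_of_lt_sub hk
        refine Finset.mem_filter.mpr ⟨hK i k.succPNat ?_, ?_⟩
        · rw [← PNat.coe_le_coe, Nat.succPNat_coe]; omega
        · rw [← PNat.coe_lt_coe, Nat.succPNat_coe]; omega
      · intro t ht
        obtain ⟨-, ht2⟩ := Finset.mem_filter.mp ht
        rw [← PNat.coe_lt_coe] at ht2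
        rw [Finset.mem_range]
        have := t.pos
        omega
      · intro k hk; simp [Nat.succPNat]
      · intro t ht
        exact PNat.succPNat_natPred t
      · intro k hk; rfl
    calc ∏ i, ∏ k ∈ Finset.range ((xobs i : ℕ) - 1), (1 - w k.succPNat)
        = ∏ i, ∏ t ∈ K, (if t < xobs i then (1 - w t) else 1) :=
          Finset.prod_congr rfl fun i _ => step i
      _ = ∏ t ∈ K, ∏ i, (if t < xobs i then (1 - w t) else 1) := Finset.prod_comm
      _ = ∏ t ∈ K, (1 - w t) ^ (Finset.univ.filter (fun i : Fin n => t < xobs i)).card := by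
          refine Finset.prod_congr rfl fun t _ => ?_
          rw [← Finset.prod_filter, Finset.prod_const]

end aux

section cyl

def cylSets : Set (Set (ℕ+ → ℝ)) :=
  {S | ∃ (J : Finset ℕ+) (B : ℕ+ → Set ℝ), (∀ k, MeasurableSet (B k)) ∧
    S = {w | ∀ k ∈ J, w k ∈ B k}}

lemma cyl_measurable (J : Finset ℕ+) (B : ℕ+ → Set ℝ) (hB : ∀ k, MeasurableSet (B k)) :
    MeasurableSet {w : ℕ+ → ℝ | ∀ k ∈ J, w k ∈ B k} := by
  have : {w : ℕ+ → ℝ | ∀ k ∈ J, w k ∈ B k} = ⋂ k ∈ (J : Set ℕ+), (fun w => w k) ⁻¹' B k := by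
    ext w; simp
  rw [this]
  exact MeasurableSet.biInter J.countable_toSet fun k _ => (measurable_pi_apply k) (hB k)

lemma isPiSystem_cylSets : IsPiSystem cylSets := by
  rintro S1 ⟨J1, B1, hB1, rfl⟩ S2 ⟨J2, B2, hB2, rfl⟩ -
  refine ⟨J1 ∪ J2, fun k => (if k ∈ J1 then B1 k else Set.univ) ∩
    (if k ∈ J2 then B2 k else Set.univ), fun k => ?_, ?_⟩
  · exact MeasurableSet.inter (by split <;> [exact hB1 k; exact MeasurableSet.univ])
      (by split <;> [exact hB2 k; exact MeasurableSet.univ])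
  · ext w
    simp only [Set.mem_inter_iff, Set.mem_setOf_eq, Finset.mem_union]
    constructor
    · rintro ⟨h1, h2⟩ k hk
      constructor
      · split
        · exact h1 k ‹_›
        · trivial
      · split
        · exact h2 k ‹_›
        · trivial
    · intro h
      constructor
      · intro k hk
        have := (h k (Or.inl hk)).1
        rwa [if_pos hk] at this
      · intro k hk
        have := (h k (Or.inr hk)).2
        rwa [if_pos hk] at this

lemma generateFrom_cylSets :
    (inferInstance : MeasurableSpace (ℕ+ → ℝ)) = MeasurableSpace.generateFrom cylSets := by
  refine le_antisymm ?_ (MeasurableSpace.generateFrom_le ?_)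
  · refine iSup_le fun k => ?_
    refine measurable_iff_comap_le.mp ?_
    intro s hs
    refine MeasurableSpace.measurableSet_generateFrom ?_
    refine ⟨{k}, fun _ => s, fun _ => hs, ?_⟩
    ext w; simp
  · rintro S ⟨J, B, hB, rfl⟩
    exact cyl_measurable J B hB

end cyl

section core

open MeasureTheory Measure ENNReal Set

lemma cylinder_lintegral_prod (m : ℕ+ → ℝ) (hm : ∀ t, 0 < m t)
    (hbm : ∀ t : ℕ, 0 < survMass m t)
    (L : Measure (ℕ+ → ℝ)) [IsProbabilityMeasure L]
    (hL : ∀ (J : Finset ℕ+) (B : ℕ+ → Set ℝ), (∀ k, MeasurableSet (B k)) →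
      L {w | ∀ k ∈ J, w k ∈ B k} = ∏ k ∈ J, betaMeasure (m k) (survMass m k) (B k))
    (K : Finset ℕ+) (h : ℕ+ → ℝ → ℝ≥0∞) (hh : ∀ k, Measurable (h k)) :
    ∫⁻ w, ∏ k ∈ K, h k (w k) ∂L
      = ∏ k ∈ K, ∫⁻ x, h k x ∂betaMeasure (m k) (survMass m k) := by
  haveI : ∀ k : K, IsProbabilityMeasure (betaMeasure (m k) (survMass m (k : ℕ+))) :=
    fun k => betaMeasure_isProb (hm k) (hbm _)
  haveI hsf : ∀ k : K, SigmaFinite (betaMeasure (m k) (survMass m (k : ℕ+))) :=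
    fun k => inferInstance
  set r : (ℕ+ → ℝ) → (K → ℝ) := fun w k => w k with hr
  have hrm : Measurable r := measurable_pi_lambda _ fun k => measurable_pi_apply _
  have hmap : Measure.map r L
      = Measure.pi (fun k : K => betaMeasure (m k) (survMass m (k : ℕ+))) := by
    refine (Measure.pi_eq (μ := fun k : K => betaMeasure (m (k : ℕ+)) (survMass m (k : ℕ+))) fun s hs => ?_).symm
    rw [Measure.map_apply hrm (MeasurableSet.univ_pi hs)]
    have hpre : r ⁻¹' Set.univ.pi s
        = {w | ∀ k ∈ K, w k ∈ (fun k => if hk : k ∈ K then s ⟨k, hk⟩ else Set.univ) k} := by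
      ext w
      simp only [Set.mem_preimage, Set.mem_univ_pi, Set.mem_setOf_eq]
      constructor
      · intro hw k hk
        simpa only [dif_pos hk] using hw ⟨k, hk⟩
      · intro hw k
        simpa only [dif_pos k.2] using hw k k.2
    rw [hpre, hL K _ (fun k => by
      by_cases hk : k ∈ K
      · rw [dif_pos hk]; exact hs _
      · rw [dif_neg hk]; exact MeasurableSet.univ)]
    rw [← Finset.prod_coe_sort]
    exact Finset.prod_congr rfl fun k _ => by rw [dif_pos k.2]
  calc ∫⁻ w, ∏ k ∈ K, h k (w k) ∂L
      = ∫⁻ w, ∏ k : K, h k (r w k) ∂L := by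
        refine lintegral_congr fun w => ?_
        exact (Finset.prod_coe_sort K (fun k => h k (w k))).symm
    _ = ∫⁻ v, ∏ k : K, h k (v k) ∂(Measure.map r L) :=
        (lintegral_map (show Measurable fun v : ({x // x ∈ K} → ℝ) =>
            ∏ k : {x // x ∈ K}, h (↑k) (v k) from
          Finset.measurable_prod _ fun k _ => (hh _).comp (measurable_pi_apply _)) hrm).symm
    _ = ∏ k : K, ∫⁻ x, h k x ∂betaMeasure (m k) (survMass m (k : ℕ+)) := by
        rw [hmap]
        exact lintegral_pi_prod _ _ (fun k => hh (k : ℕ+))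
    _ = ∏ k ∈ K, ∫⁻ x, h k x ∂betaMeasure (m k) (survMass m k) :=
        Finset.prod_coe_sort K (fun k => ∫⁻ x, h k x ∂betaMeasure (m k) (survMass m k))

end core

/-- **conjugacy of the Dirichlet process.**  With `n_t = #{i : x_i = t}`
and likelihood `L(w) = ∏_{i=1}^n P_w({x_i})`, the normalizing constant `Z = ∫ L dΛ_m` is
in `(0,∞)` and `Λ_m` weighted by the density `L` equals `Z ⬝ Λ_{m_*}`, where `m_*({t}) =
m({t}) + n_t` (so that `m_*((t,∞)) = m((t,∞)) + n_{>t}` with `n_{>t} = #{i : x_i > t}`):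
the posterior of a Dirichlet process `Dir(m)` given an i.i.d. sample `X_1, …, X_n` is the
Dirichlet process `Dir(m_*)`. -/
theorem dirichlet_posterior
    (m : ℕ+ → ℝ) (hm : ∀ t, 0 < m t) (hmsum : Summable m)
    (L : Measure (ℕ+ → ℝ)) [IsProbabilityMeasure L]
    (hL : ∀ (J : Finset ℕ+) (B : ℕ+ → Set ℝ), (∀ k, MeasurableSet (B k)) →
      L {w | ∀ k ∈ J, w k ∈ B k} =
        ∏ k ∈ J, betaMeasure (m k) (survMass m k) (B k))
    (n : ℕ) (hn : 1 ≤ n) (xobs : Fin n → ℕ+) :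
    0 < (∫ w, ∏ i : Fin n, stickWeight w (xobs i) ∂L) ∧
    ∀ (L' : Measure (ℕ+ → ℝ)), IsProbabilityMeasure L' →
      (∀ (J : Finset ℕ+) (B : ℕ+ → Set ℝ), (∀ k, MeasurableSet (B k)) →
        L' {w | ∀ k ∈ J, w k ∈ B k} =
          ∏ k ∈ J, betaMeasure
            (m k + (Finset.univ.filter (fun i : Fin n => xobs i = k)).card)
            (survMass m k + (Finset.univ.filter (fun i : Fin n => k < xobs i)).card)
            (B k)) →
      L.withDensity (fun w => ENNReal.ofReal (∏ i : Fin n, stickWeight w (xobs i))) =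
        ENNReal.ofReal (∫ w, ∏ i : Fin n, stickWeight w (xobs i) ∂L) • L' := by
  classical
  have hbm : ∀ t : ℕ, 0 < survMass m t := survMass_pos hm hmsum
  -- abbreviations
  set M : ℕ+ := Finset.univ.sup xobs with hMdef
  have hxM : ∀ i, xobs i ≤ M := fun i => Finset.le_sup (Finset.mem_univ i)
  set T : Finset ℕ+ := Finset.Icc 1 M with hTdef
  set Cf : ℕ+ → ℝ := fun k =>
    betaFn (m k + (Finset.univ.filter (fun i : Fin n => xobs i = k)).card)
        (survMass m k + (Finset.univ.filter (fun i : Fin n => k < xobs i)).card) /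
      betaFn (m k) (survMass m k) with hCfdef
  have hCpos : ∀ k, 0 < Cf k := fun k => div_pos
    (betaFn_pos (add_pos_of_pos_of_nonneg (hm k) (Nat.cast_nonneg _))
      (add_pos_of_pos_of_nonneg (hbm k) (Nat.cast_nonneg _)))
    (betaFn_pos (hm k) (hbm k))
  have hCf1 : ∀ k : ℕ+, k ∉ T → Cf k = 1 := by
    intro k hk
    rw [hTdef, Finset.mem_Icc, not_and] at hk
    have hkM : ¬ k ≤ M := hk k.one_le
    have h1 : (Finset.univ.filter (fun i : Fin n => xobs i = k)).card = 0 := by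
      rw [Finset.card_eq_zero, Finset.filter_eq_empty_iff]
      intro i _ hik
      exact hkM (hik ▸ hxM i)
    have h2 : (Finset.univ.filter (fun i : Fin n => k < xobs i)).card = 0 := by
      rw [Finset.card_eq_zero, Finset.filter_eq_empty_iff]
      intro i _ hik
      exact hkM ((le_of_lt hik).trans (hxM i))
    rw [hCfdef]
    dsimp only
    rw [h1, h2, Nat.cast_zero, add_zero, add_zero, div_self (betaFn_pos (hm k) (hbm k)).ne']
  set Z₀ : ℝ := ∏ k ∈ T, Cf k with hZdef
  have hZpos : 0 < Z₀ := Finset.prod_pos fun k _ => hCpos k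
  -- a.e. coordinates in (0,1)
  have hIoo : ∀ k : ℕ+, ∀ᵐ w ∂L, w k ∈ Set.Ioo (0:ℝ) 1 := by
    intro k
    have h0 := hL {k} (fun _ => (Set.Ioo (0:ℝ) 1)ᶜ) (fun _ => measurableSet_Ioo.compl)
    rw [Finset.prod_singleton] at h0
    have hz : betaMeasure (m k) (survMass m k) ((fun _ : ℕ+ => (Set.Ioo (0:ℝ) 1)ᶜ) k) = 0 := by
      rw [betaMeasure, withDensity_apply _ measurableSet_Ioo.compl,
        Measure.restrict_restrict measurableSet_Ioo.compl, Set.compl_inter_self,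
        Measure.restrict_empty, lintegral_zero_measure]
    rw [hz] at h0
    rw [ae_iff]
    have hset : {w : ℕ+ → ℝ | ¬ w k ∈ Set.Ioo (0:ℝ) 1}
        = {w : ℕ+ → ℝ | ∀ j ∈ ({k} : Finset ℕ+), w j ∈ (fun _ : ℕ+ => (Set.Ioo (0:ℝ) 1)ᶜ) j} := by
      ext w; simp
    rw [hset]
    exact h0
  have hae : ∀ᵐ w ∂L, ∀ k : ℕ+, w k ∈ Set.Ioo (0:ℝ) 1 := ae_all_iff.mpr hIoo
  -- measurability and nonnegativity of the likelihood
  have hfm : Measurable (fun w : ℕ+ → ℝ => ∏ i : Fin n, stickWeight w (xobs i)) := by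
    refine Finset.measurable_prod _ fun i _ => ?_
    simp only [stickWeight]
    exact (measurable_pi_apply _).mul
      (Finset.measurable_prod _ fun k _ => measurable_const.sub (measurable_pi_apply _))
  have hfnn : 0 ≤ᵐ[L] (fun w : ℕ+ → ℝ => ∏ i : Fin n, stickWeight w (xobs i)) := by
    filter_upwards [hae] with w hw
    refine Finset.prod_nonneg fun i _ => mul_nonneg (hw _).1.le
      (Finset.prod_nonneg fun k _ => ?_)
    have := (hw k.succPNat).2
    linarith
  -- the key cylinder computation
  have key : ∀ (J : Finset ℕ+) (B : ℕ+ → Set ℝ), (∀ k, MeasurableSet (B k)) →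
      ∫⁻ w in {w | ∀ k ∈ J, w k ∈ B k},
          ENNReal.ofReal (∏ i : Fin n, stickWeight w (xobs i)) ∂L
        = ENNReal.ofReal Z₀ * ∏ k ∈ J,
            betaMeasure (m k + (Finset.univ.filter (fun i : Fin n => xobs i = k)).card)
              (survMass m k + (Finset.univ.filter (fun i : Fin n => k < xobs i)).card) (B k) := by
    intro J B hB
    set K : Finset ℕ+ := J ∪ T with hKdef
    set B' : ℕ+ → Set ℝ := fun k => if k ∈ J then B k else Set.univ with hB'def
    have hB'm : ∀ k, MeasurableSet (B' k) := fun k => by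
      rw [hB'def]; dsimp only; split
      · exact hB k
      · exact MeasurableSet.univ
    set h : ℕ+ → ℝ → ℝ≥0∞ := fun k x => (B' k).indicator
      (fun y => ENNReal.ofReal (y ^ (Finset.univ.filter (fun i : Fin n => xobs i = k)).card *
        (1 - y) ^ (Finset.univ.filter (fun i : Fin n => k < xobs i)).card)) x with hhdef
    have hhm : ∀ k, Measurable (h k) := fun k =>
      Measurable.indicator (((measurable_id'.pow_const _).mul
        ((measurable_const.sub measurable_id').pow_const _)).ennreal_ofReal) (hB'm k)
    have hSm : MeasurableSet {w : ℕ+ → ℝ | ∀ k ∈ J, w k ∈ B k} := cyl_measurable J B hB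
    rw [← lintegral_indicator hSm]
    have heq : ∀ᵐ w ∂L, Set.indicator {w : ℕ+ → ℝ | ∀ k ∈ J, w k ∈ B k}
        (fun w => ENNReal.ofReal (∏ i : Fin n, stickWeight w (xobs i))) w
          = ∏ k ∈ K, h k (w k) := by
      filter_upwards [hae] with w hw
      by_cases hwS : w ∈ {w : ℕ+ → ℝ | ∀ k ∈ J, w k ∈ B k}
      · rw [Set.indicator_of_mem hwS]
        have hfw : ∏ i : Fin n, stickWeight w (xobs i)
            = ∏ k ∈ K, (w k ^ (Finset.univ.filter (fun i : Fin n => xobs i = k)).card *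
              (1 - w k) ^ (Finset.univ.filter (fun i : Fin n => k < xobs i)).card) :=
          stick_prod_eq xobs w K (fun i t ht => Finset.mem_union_right _
            (Finset.mem_Icc.mpr ⟨t.one_le, ht.trans (hxM i)⟩))
        rw [hfw, ENNReal.ofReal_prod_of_nonneg (fun k _ => mul_nonneg
          (pow_nonneg (hw k).1.le _)
          (pow_nonneg (by have := (hw k).2; linarith) _))]
        refine Finset.prod_congr rfl fun k hk => ?_
        have hmem : w k ∈ B' k := by
          rw [hB'def]; dsimp only; split
          · exact hwS k ‹_›
          · trivial
        simp only [hhdef]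
        rw [Set.indicator_of_mem hmem]
      · rw [Set.indicator_of_notMem hwS]
        simp only [Set.mem_setOf_eq, not_forall] at hwS
        obtain ⟨k, hkJ, hk⟩ := hwS
        have hnm : w k ∉ B' k := by
          rw [hB'def]; dsimp only; rw [if_pos hkJ]; exact hk
        have hz0 : h k (w k) = 0 := by
          simp only [hhdef]
          rw [Set.indicator_of_notMem hnm]
        exact (Finset.prod_eq_zero (Finset.mem_union_left _ hkJ) hz0).symm
    rw [lintegral_congr_ae heq, cylinder_lintegral_prod m hm hbm L hL K h hhm]
    have hfact : ∀ k : ℕ+, ∫⁻ x, h k x ∂betaMeasure (m k) (survMass m k)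
        = ENNReal.ofReal (Cf k) *
          betaMeasure (m k + (Finset.univ.filter (fun i : Fin n => xobs i = k)).card)
            (survMass m k + (Finset.univ.filter (fun i : Fin n => k < xobs i)).card) (B' k) :=
      fun k => betaMeasure_pow_eval (hm k) (hbm k) _ _ (hB'm k)
    rw [Finset.prod_congr rfl (fun k _ => hfact k), Finset.prod_mul_distrib]
    congr 1
    · rw [← ENNReal.ofReal_prod_of_nonneg (fun k _ => (hCpos k).le)]
      congr 1
      rw [hZdef]
      exact (Finset.prod_subset Finset.subset_union_right
        (fun k _ hk => hCf1 k hk)).symm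
    · have hJ : ∀ k ∈ J, betaMeasure
          (m k + (Finset.univ.filter (fun i : Fin n => xobs i = k)).card)
          (survMass m k + (Finset.univ.filter (fun i : Fin n => k < xobs i)).card) (B' k)
          = betaMeasure
          (m k + (Finset.univ.filter (fun i : Fin n => xobs i = k)).card)
          (survMass m k + (Finset.univ.filter (fun i : Fin n => k < xobs i)).card) (B k) := by
        intro k hk
        rw [hB'def]; dsimp only; rw [if_pos hk]
      refine ((Finset.prod_subset Finset.subset_union_left (fun k _ hk => ?_)).symm).trans
        (Finset.prod_congr rfl hJ)
      rw [hB'def]; dsimp only; rw [if_neg hk]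
      exact betaMeasure_univ (add_pos_of_pos_of_nonneg (hm k) (Nat.cast_nonneg _))
        (add_pos_of_pos_of_nonneg (hbm k) (Nat.cast_nonneg _))
  -- total mass
  have htot : ∫⁻ w, ENNReal.ofReal (∏ i : Fin n, stickWeight w (xobs i)) ∂L
      = ENNReal.ofReal Z₀ := by
    have h0 := key ∅ (fun _ => Set.univ) (fun _ => MeasurableSet.univ)
    have hset : {w : ℕ+ → ℝ | ∀ k ∈ (∅ : Finset ℕ+), w k ∈ (fun _ : ℕ+ => Set.univ) k}
        = Set.univ := by
      ext w; simp
    rw [hset, Measure.restrict_univ, Finset.prod_empty, mul_one] at h0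
    exact h0
  -- Bochner integral value
  have hZint : ∫ w, ∏ i : Fin n, stickWeight w (xobs i) ∂L = Z₀ := by
    rw [integral_eq_lintegral_of_nonneg_ae hfnn hfm.aestronglyMeasurable, htot,
      ENNReal.toReal_ofReal hZpos.le]
  constructor
  · rw [hZint]; exact hZpos
  · intro L' hL'prob hL'
    rw [hZint]
    haveI hfin : IsFiniteMeasure
        (L.withDensity (fun w => ENNReal.ofReal (∏ i : Fin n, stickWeight w (xobs i)))) :=
      isFiniteMeasure_withDensity (by rw [htot]; exact ENNReal.ofReal_ne_top)
    refine ext_of_generate_finite cylSets generateFrom_cylSets isPiSystem_cylSets ?_ ?_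
    · rintro S ⟨J, B, hB, rfl⟩
      rw [withDensity_apply _ (cyl_measurable J B hB), key J B hB,
        Measure.smul_apply, smul_eq_mul, hL' J B hB]
    · rw [withDensity_apply _ MeasurableSet.univ, Measure.restrict_univ, htot,
        Measure.smul_apply, smul_eq_mul, measure_univ, mul_one]
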